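/- arXiv:0708.2475 — 2 statements merged into one kernel-verified Lean document; each statement's English description precedes it below -/
import Mathlib

section
/- Let C be a small category with pullbacks and let M : Cᵒᵖ ⥤ Grpd be a presheaf of groupoids. Then the Grothendieck construction C/M has pullbacks, and they are computed as follows: given morphisms (g,α) : (Y,b) → (X,a) and (h,β) : (Z,c) → (X,a) in C/M, the object (Y ×_X Z, M(g∘p_Y)(a)) (where p_Y, p_Z are the projections of the pullback Y ×_X Z in C) together with the projections (p_Y, M(p_Y)(α)) and (p_Z, M(p_Z)(β)) is a pullback of (g,α) and (h,β) in C/M. In particular the forgetful functor C/M → C preserves pullbacks. -/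
/-!
STATEMENT 0: For a small category `C` with pullbacks and a presheaf of
groupoids `M : Cᵒᵖ ⥤ Grpd`, the Grothendieck construction `C/M` has pullbacks,
computed by the explicit formula: the pullback of `(g,α) : (Y,b) → (X,a)` and
`(h,β) : (Z,c) → (X,a)` is `(Y ×_X Z, M(p_Y ≫ g)(a))` with projections
`(p_Y, M(p_Y)(α))` and `(p_Z, M(p_Z)(β))`; and the forgetful functor
`C/M ⥤ C` preserves pullbacks.

We realize `C/M` (objects: pairs `(X, a)` with `a ∈ M(X)`; morphisms
`(Y,b) → (X,a)`: pairs `(u : Y ⟶ X, α : b ≅ M(u)(a))`) as the opposite of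
Mathlib's Grothendieck construction of `M ⋙ Grpd.forgetToCat` over `Cᵒᵖ`;
since the fibers are groupoids this encodes exactly the same category (the
fiber component of a morphism is recorded as the inverse isomorphism
`M(u)(a) ⟶ b`).
-/

open CategoryTheory Opposite Limits

universe u

namespace Hollander

variable {C : Type u} [SmallCategory C]

/-- The Grothendieck construction of a presheaf of groupoids, as a covariant
Grothendieck construction over `Cᵒᵖ`. -/
abbrev CMG (M : Cᵒᵖ ⥤ Grpd.{u, u}) := Grothendieck (M ⋙ Grpd.forgetToCat)

/-- The category `C/M` associated to a presheaf of groupoids `M` on `C`. -/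
abbrev CM (M : Cᵒᵖ ⥤ Grpd.{u, u}) := (CMG M)ᵒᵖ

variable (M : Cᵒᵖ ⥤ Grpd.{u, u})

/-- The object `(X, a)` of `C/M`. -/
def CMobj (X : C) (a : M.obj (op X)) : CM M := op ⟨op X, a⟩

/-- The morphism `(Y, b) ⟶ (X, a)` of `C/M` determined by `u : Y ⟶ X` and the
isomorphism `α : M(u)(a) ⟶ b` (every morphism of the groupoid `M(Y)` is an
isomorphism). -/
def CMhom {X Y : C} {a : M.obj (op X)} {b : M.obj (op Y)}
    (u : Y ⟶ X) (α : (M.map u.op).obj a ⟶ b) :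
    CMobj M Y b ⟶ CMobj M X a :=
  Quiver.Hom.op (show (⟨op X, a⟩ : CMG M) ⟶ ⟨op Y, b⟩ from ⟨u.op, α⟩)

/-- The forgetful functor `C/M ⥤ C`, `(X, a) ↦ X`. -/
def CMforget : CM M ⥤ C := (Grothendieck.forget (M ⋙ Grpd.forgetToCat)).op ⋙ unopUnop C

end Hollander

namespace Stmt0Aux
open Hollander

variable {C : Type u} [SmallCategory C]

section rflLemmas
variable (N : Cᵒᵖ ⥤ Grpd.{u, u})

lemma grpd_comp_obj {A B D : Grpd.{u, u}} (x : A ⟶ B) (y : B ⟶ D) (d : A) :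
    (x ≫ y).obj d = y.obj (x.obj d) := rfl

lemma grpd_comp_map {A B D : Grpd.{u, u}} (x : A ⟶ B) (y : B ⟶ D) {d d' : A} (θ : d ⟶ d') :
    (x ≫ y).map θ = y.map (x.map θ) := rfl

lemma F_map_obj {A B : Cᵒᵖ} (f : A ⟶ B) (d : N.obj A) :
    ((N ⋙ Grpd.forgetToCat).map f).toFunctor.obj d = (N.map f).obj d := rfl

lemma F_map_map {A B : Cᵒᵖ} (f : A ⟶ B) {d d' : N.obj A} (θ : d ⟶ d') :
    ((N ⋙ Grpd.forgetToCat).map f).toFunctor.map θ = (N.map f).map θ := rfl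

end rflLemmas

/-- Cancel a morphism with invertible fiber component on the left. -/
lemma pre_cancel {Γ : Type u} [Category.{u} Γ] {F : Γ ⥤ Cat.{u, u}}
    {A B V : Grothendieck F} (k : A ⟶ B) (t t' : B ⟶ V) (hiso : IsIso k.fiber)
    (hbase : t.base = t'.base) (hcomp : k ≫ t = k ≫ t') : t = t' := by
  obtain ⟨tb, tf⟩ := t
  obtain ⟨tb', tf'⟩ := t'
  dsimp at hbase
  subst hbase
  have hf := Grothendieck.congr hcomp
  simp only [Grothendieck.comp_fiber, eqToHom_refl, Category.id_comp, eqToHom_trans_assoc] at hf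
  fapply Grothendieck.ext
  · rfl
  · have := hiso
    have hf2 := (cancel_epi (eqToHom _)).mp hf
    simpa using (cancel_epi ((F.map tb).toFunctor.map k.fiber)).mp hf2

variable [HasPullbacks C] (M : Cᵒᵖ ⥤ Grpd.{u, u})
variable {X Y Z : C} (a : M.obj (op X)) (b : M.obj (op Y)) (c : M.obj (op Z))
    (g : Y ⟶ X) (h : Z ⟶ X)
    (α : (M.map g.op).obj a ⟶ b) (β : (M.map h.op).obj a ⟶ c)

/-- The lift to the pullback in `C` induced by a pushout cocone in `CMG M`. -/
noncomputable def theLift (s : PushoutCocone (CMhom M h β).unop (CMhom M g α).unop) :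
    s.pt.base.unop ⟶ pullback g h :=
  pullback.lift s.inr.base.unop s.inl.base.unop
    (show s.inr.base.unop ≫ g = s.inl.base.unop ≫ h from
      Quiver.Hom.op_inj (congrArg Grothendieck.Hom.base s.condition).symm)

lemma theLift_fst (s : PushoutCocone (CMhom M h β).unop (CMhom M g α).unop) :
    (pullback.fst g h).op ≫ (theLift M a b c g h α β s).op = s.inr.base := by
  rw [← op_comp, theLift]; erw [pullback.lift_fst]; rfl

lemma theLift_snd (s : PushoutCocone (CMhom M h β).unop (CMhom M g α).unop) :
    (pullback.snd g h).op ≫ (theLift M a b c g h α β s).op = s.inl.base := by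
  rw [← op_comp, theLift]; erw [pullback.lift_snd]; rfl

/-- The descent morphism. -/
noncomputable def theDesc (s : PushoutCocone (CMhom M h β).unop (CMhom M g α).unop) :
    (show CMG M from ⟨op (pullback g h), (M.map (pullback.fst g h ≫ g).op).obj a⟩) ⟶ s.pt :=
  ⟨(theLift M a b c g h α β s).op,
    eqToHom (by
      calc (M.map (theLift M a b c g h α β s).op).obj
            ((M.map (pullback.fst g h ≫ g).op).obj a)
          = (M.map ((pullback.fst g h ≫ g).op ≫
              (theLift M a b c g h α β s).op)).obj a := by rw [Functor.map_comp]; rfl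
        _ = (M.map s.inr.base).obj ((M.map g.op).obj a) := by
              rw [op_comp, Category.assoc, theLift_fst]; erw [Functor.map_comp]; rfl) ≫
    (M.map s.inr.base).map α ≫ s.inr.fiber⟩

lemma eqToHom_cancel_aux {A D : Type*} [Groupoid A] [Category D] (G : A ⥤ D) {p q p' : A}
    (f : p ⟶ q) (e3 : p = p') {x y z : D} (e1 : x = y) (e2 : y = G.obj q)
    (e4 : G.obj p' = z) (e5 : z = G.obj p) (e6 : G.obj q = x) {v : D} (k : x ⟶ v) :
    eqToHom e1 ≫ eqToHom e2 ≫ G.map (Groupoid.inv f ≫ eqToHom e3) ≫ eqToHom e4 ≫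
      (eqToHom e5 ≫ G.map f ≫ eqToHom e6) ≫ k = k := by
  subst e1 e2 e3 e4
  simp

lemma eqToHom_swap_aux {D : Type*} [Category D] {x y z u v : D} (A : x ⟶ v) (B : u ⟶ v)
    (e1 : x = y) (e2 : y = z) (e3 : z = u) (e : u = x)
    (H : A = eqToHom e1 ≫ eqToHom e2 ≫ eqToHom e3 ≫ B) : B = eqToHom e ≫ A := by
  subst e1 e2 e3
  simp [H]

lemma eqToHom_cancel_aux2 {A D : Type*} [Groupoid A] [Category D] (G : A ⥤ D) {p q p' : A}
    (f : p ⟶ q) (e3 : p = p') {x y z u : D} {v : D} (e1 : x = y) (e2 : y = G.obj q)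
    (e4 : G.obj p' = z) (eh : z = u) (e5 : u = G.obj p) (e6 : G.obj q = x)
    (R : z ⟶ v) (P : u ⟶ x) (k : x ⟶ v)
    (hR : R = eqToHom eh ≫ P ≫ k) (hP : P = eqToHom e5 ≫ G.map f ≫ eqToHom e6) :
    eqToHom e1 ≫ eqToHom e2 ≫ G.map (Groupoid.inv f ≫ eqToHom e3) ≫ eqToHom e4 ≫ R = k := by
  subst hR hP
  subst e1 e2 e3 e4 eh
  simp

lemma eqToHom_inv_aux {A : Type*} [Groupoid A] {x y z w x' w' z' : A}
    (e1 : x = y) (e2 : y = z) (f : z ⟶ w) (e3 : z = x') (e4 : x = z') (f' : z' ⟶ w')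
    (e5 : z' = x') :
    eqToHom e1 ≫ eqToHom e2 ≫ f ≫ (Groupoid.inv f ≫ eqToHom e3) =
      eqToHom e4 ≫ f' ≫ (Groupoid.inv f' ≫ eqToHom e5) := by
  simp

lemma fac_r (s : PushoutCocone (CMhom M h β).unop (CMhom M g α).unop) :
    (CMhom M (pullback.fst g h)
        (Groupoid.inv ((M.map (pullback.fst g h).op).map α) ≫
          eqToHom (by rw [op_comp, M.map_comp]; rfl))).unop ≫ theDesc M a b c g h α β s =
      s.inr := by
  fapply Grothendieck.ext
  · exact theLift_fst M a b c g h α β s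
  · have hM : M.map s.inr.base =
        M.map (pullback.fst g h).op ≫ M.map (theLift M a b c g h α β s).op := by
      rw [← M.map_comp, theLift_fst]; rfl
    have hc := Functor.congr_hom hM α
    simp only [Grothendieck.comp_fiber, CMhom, Quiver.Hom.unop_op, theDesc]
    erw [Grothendieck.comp_fiber]
    dsimp only [Quiver.Hom.op, Quiver.Hom.unop]
    erw [F_map_map M (theLift M a b c g h α β s).op]
    rw [hc]
    exact eqToHom_cancel_aux (M.map (theLift M a b c g h α β s).op)
      ((M.map (pullback.fst g h).op).map α) _ _ _ _ _ _ _

lemma fac_l (s : PushoutCocone (CMhom M h β).unop (CMhom M g α).unop) :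
    (CMhom M (pullback.snd g h)
        (Groupoid.inv ((M.map (pullback.snd g h).op).map β) ≫
          eqToHom (by rw [pullback.condition, op_comp, M.map_comp]; rfl))).unop ≫
      theDesc M a b c g h α β s = s.inl := by
  fapply Grothendieck.ext
  · exact theLift_snd M a b c g h α β s
  · have hM : M.map s.inl.base =
        M.map (pullback.snd g h).op ≫ M.map (theLift M a b c g h α β s).op := by
      rw [← M.map_comp, theLift_snd]; rfl
    have hc := Functor.congr_hom hM β
    have hcond := Grothendieck.congr s.condition
    simp only [Grothendieck.comp_fiber, CMhom, Quiver.Hom.unop_op, F_map_map, F_map_obj,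
      Category.assoc, eqToHom_trans_assoc] at hcond
    have hbase := congrArg Grothendieck.Hom.base s.condition
    simp only [Grothendieck.comp_base, CMhom, Quiver.Hom.unop_op] at hbase
    have hobj : (M.map s.inr.base).obj ((M.map g.op).obj a) =
        (M.map s.inl.base).obj ((M.map h.op).obj a) := by
      calc (M.map s.inr.base).obj ((M.map g.op).obj a)
          = (M.map (g.op ≫ s.inr.base)).obj a := by erw [M.map_comp]; rfl
        _ = (M.map (h.op ≫ s.inl.base)).obj a := by
              exact congrArg (fun f => (M.map f).obj a) hbase.symm
        _ = _ := by erw [M.map_comp]; rfl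
    have hcond2 : (M.map s.inr.base).map α ≫ s.inr.fiber =
        eqToHom hobj ≫ (M.map s.inl.base).map β ≫ s.inl.fiber := by
      rw [eqToHom_comp_iff] at hcond
      exact eqToHom_swap_aux _ _ _ _ _ _ hcond
    simp only [Grothendieck.comp_fiber, CMhom, Quiver.Hom.unop_op, theDesc]
    erw [Grothendieck.comp_fiber]
    dsimp only [Quiver.Hom.op, Quiver.Hom.unop]
    erw [F_map_map M (theLift M a b c g h α β s).op]
    exact eqToHom_cancel_aux2 (M.map (theLift M a b c g h α β s).op)
      ((M.map (pullback.snd g h).op).map β) _ _ _ _ _ _ _ _ _ _ hcond2 hc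

lemma theUniq (s : PushoutCocone (CMhom M h β).unop (CMhom M g α).unop)
    (m : (show CMG M from
        ⟨op (pullback g h), (M.map (pullback.fst g h ≫ g).op).obj a⟩) ⟶ s.pt)
    (hl : (CMhom M (pullback.snd g h)
        (Groupoid.inv ((M.map (pullback.snd g h).op).map β) ≫
          eqToHom (by rw [pullback.condition, op_comp, M.map_comp]; rfl))).unop ≫ m = s.inl)
    (hr : (CMhom M (pullback.fst g h)
        (Groupoid.inv ((M.map (pullback.fst g h).op).map α) ≫
          eqToHom (by rw [op_comp, M.map_comp]; rfl))).unop ≫ m = s.inr) :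
    m = theDesc M a b c g h α β s := by
  have hb1 := congrArg Grothendieck.Hom.base hr
  have hb2 := congrArg Grothendieck.Hom.base hl
  simp only [Grothendieck.comp_base, CMhom, Quiver.Hom.unop_op] at hb1 hb2
  have hbase : m.base = (theLift M a b c g h α β s).op := by
    apply Quiver.Hom.unop_inj
    apply pullback.hom_ext
    · simp only [theLift, Quiver.Hom.unop_op, pullback.lift_fst]
      exact Quiver.Hom.op_inj (hb1.trans (theLift_fst M a b c g h α β s).symm)
    · simp only [theLift, Quiver.Hom.unop_op, pullback.lift_snd]
      exact Quiver.Hom.op_inj (hb2.trans (theLift_snd M a b c g h α β s).symm)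
  have hiso : IsIso (Groupoid.inv ((M.map (pullback.fst g h).op).map α) ≫
      (eqToHom (by rw [op_comp, M.map_comp]; rfl) :
        (M.map (pullback.fst g h).op).obj ((M.map g.op).obj a) ⟶
          (M.map (pullback.fst g h ≫ g).op).obj a)) := inferInstance
  exact pre_cancel (CMhom M (pullback.fst g h)
        (Groupoid.inv ((M.map (pullback.fst g h).op).map α) ≫
          eqToHom (by rw [op_comp, M.map_comp]; rfl))).unop m (theDesc M a b c g h α β s) hiso hbase
    (by rw [hr, fac_r M a b c g h α β s])


theorem key {X Y Z : C} (a : M.obj (op X)) (b : M.obj (op Y)) (c : M.obj (op Z))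
    (g : Y ⟶ X) (h : Z ⟶ X)
    (α : (M.map g.op).obj a ⟶ b) (β : (M.map h.op).obj a ⟶ c) :
    IsPushout
      (CMhom M h β).unop
      (CMhom M g α).unop
      ((CMhom M (pullback.snd g h)
        (Groupoid.inv ((M.map (pullback.snd g h).op).map β) ≫
          eqToHom (by rw [pullback.condition, op_comp, M.map_comp]; rfl))
        : CMobj M (pullback g h) ((M.map (pullback.fst g h ≫ g).op).obj a) ⟶
            CMobj M Z c).unop)
      ((CMhom M (pullback.fst g h)
        (Groupoid.inv ((M.map (pullback.fst g h).op).map α) ≫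
          eqToHom (by rw [op_comp, M.map_comp]; rfl))
        : CMobj M (pullback g h) ((M.map (pullback.fst g h ≫ g).op).obj a) ⟶
            CMobj M Y b).unop) := by
  have comm : (CMhom M h β).unop ≫
      ((CMhom M (pullback.snd g h)
        (Groupoid.inv ((M.map (pullback.snd g h).op).map β) ≫
          eqToHom (by rw [pullback.condition, op_comp, M.map_comp]; rfl))
        : CMobj M (pullback g h) ((M.map (pullback.fst g h ≫ g).op).obj a) ⟶
            CMobj M Z c).unop) =
      (CMhom M g α).unop ≫
      ((CMhom M (pullback.fst g h)
        (Groupoid.inv ((M.map (pullback.fst g h).op).map α) ≫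
          eqToHom (by rw [op_comp, M.map_comp]; rfl))
        : CMobj M (pullback g h) ((M.map (pullback.fst g h ≫ g).op).obj a) ⟶
            CMobj M Y b).unop) := by
    fapply Grothendieck.ext
    · show h.op ≫ (pullback.snd g h).op = g.op ≫ (pullback.fst g h).op
      rw [← op_comp, ← op_comp, pullback.condition]
    · simp [CMhom, Grothendieck.comp_fiber, Grpd.forgetToCat]
      dsimp only [Quiver.Hom.op, Quiver.Hom.unop]
      exact eqToHom_inv_aux (A := M.obj (op (pullback g h))) _ _ _ _ _ _ _
  exact IsPushout.of_isColimit' ⟨comm⟩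
    (PushoutCocone.IsColimit.mk _ (theDesc M a b c g h α β)
      (fun s => fac_l M a b c g h α β s)
      (fun s => fac_r M a b c g h α β s)
      (fun s m h1 h2 => theUniq M a b c g h α β s m h1 h2))

end Stmt0Aux





open Hollander in
theorem stmt0main {C : Type u} [SmallCategory C] [HasPullbacks C] (M : Cᵒᵖ ⥤ Grpd.{u, u}) :
    (∀ (X Y Z : C) (a : M.obj (op X)) (b : M.obj (op Y)) (c : M.obj (op Z))
      (g : Y ⟶ X) (h : Z ⟶ X)
      (α : (M.map g.op).obj a ⟶ b) (β : (M.map h.op).obj a ⟶ c),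
      IsPullback
        (CMhom M (pullback.fst g h)
          (Groupoid.inv ((M.map (pullback.fst g h).op).map α) ≫
            eqToHom (by rw [op_comp, M.map_comp]; rfl))
          : CMobj M (pullback g h) ((M.map (pullback.fst g h ≫ g).op).obj a) ⟶ CMobj M Y b)
        (CMhom M (pullback.snd g h)
          (Groupoid.inv ((M.map (pullback.snd g h).op).map β) ≫
            eqToHom (by rw [pullback.condition, op_comp, M.map_comp]; rfl))
          : CMobj M (pullback g h) ((M.map (pullback.fst g h ≫ g).op).obj a) ⟶ CMobj M Z c)
        (CMhom M g α) (CMhom M h β)) ∧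
    HasPullbacks (CM M) ∧
    Nonempty (PreservesLimitsOfShape WalkingCospan (CMforget M)) := by
  refine ⟨fun X Y Z a b c g h α β => (Stmt0Aux.key M a b c g h α β).op, ?_, ?_⟩
  · have : ∀ {A B W : CM M} (f : A ⟶ W) (k : B ⟶ W), HasLimit (cospan f k) := by
      intro A B W f k
      exact HasLimit.mk ⟨_, ((Stmt0Aux.key M W.unop.fiber A.unop.fiber B.unop.fiber
        f.unop.base.unop k.unop.base.unop f.unop.fiber k.unop.fiber).op).isLimit⟩
    exact hasPullbacks_of_hasLimit_cospan (CM M)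
  · refine ⟨⟨fun {K} => ?_⟩⟩
    have hp := ((Stmt0Aux.key M (K.obj WalkingCospan.one).unop.fiber
        (K.obj WalkingCospan.left).unop.fiber (K.obj WalkingCospan.right).unop.fiber
        (K.map WalkingCospan.Hom.inl).unop.base.unop
        (K.map WalkingCospan.Hom.inr).unop.base.unop
        (K.map WalkingCospan.Hom.inl).unop.fiber
        (K.map WalkingCospan.Hom.inr).unop.fiber).op)
    have : PreservesLimit (cospan (K.map WalkingCospan.Hom.inl) (K.map WalkingCospan.Hom.inr))
        (CMforget M) := by
      apply preservesLimit_of_preserves_limit_cone hp.isLimit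
      exact (isLimitMapConePullbackConeEquiv (CMforget M) hp.w).symm
        (pullbackIsPullback _ _)
    exact preservesLimit_of_iso_diagram (CMforget M) (diagramIsoCospan K).symm


open Hollander in
/-- Let `C` be a small category with pullbacks and
`M : Cᵒᵖ ⥤ Grpd` a presheaf of groupoids.  Then:
(1) for morphisms `(g,α) : (Y,b) → (X,a)` and `(h,β) : (Z,c) → (X,a)` of `C/M`,
the object `(Y ×_X Z, M(p_Y ≫ g)(a))` together with the projections
`(p_Y, M(p_Y)(α))` and `(p_Z, M(p_Z)(β))` is a pullback of `(g,α)` and `(h,β)`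
in `C/M`;
(2) `C/M` has pullbacks; and
(3) the forgetful functor `C/M ⥤ C` preserves pullbacks. -/
theorem stmt0 {C : Type u} [SmallCategory C] [HasPullbacks C] (M : Cᵒᵖ ⥤ Grpd.{u, u}) :
    (∀ (X Y Z : C) (a : M.obj (op X)) (b : M.obj (op Y)) (c : M.obj (op Z))
      (g : Y ⟶ X) (h : Z ⟶ X)
      (α : (M.map g.op).obj a ⟶ b) (β : (M.map h.op).obj a ⟶ c),
      IsPullback
        (CMhom M (pullback.fst g h)
          (Groupoid.inv ((M.map (pullback.fst g h).op).map α) ≫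
            eqToHom (by rw [op_comp, M.map_comp]; rfl))
          : CMobj M (pullback g h) ((M.map (pullback.fst g h ≫ g).op).obj a) ⟶ CMobj M Y b)
        (CMhom M (pullback.snd g h)
          (Groupoid.inv ((M.map (pullback.snd g h).op).map β) ≫
            eqToHom (by rw [pullback.condition, op_comp, M.map_comp]; rfl))
          : CMobj M (pullback g h) ((M.map (pullback.fst g h ≫ g).op).obj a) ⟶ CMobj M Z c)
        (CMhom M g α) (CMhom M h β)) ∧
    HasPullbacks (CM M) ∧
    Nonempty (PreservesLimitsOfShape WalkingCospan (CMforget M)) :=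
  stmt0main M
end

section
/- Let C be a small category with pullbacks equipped with a Grothendieck pretopology, M : Cᵒᵖ ⥤ Grpd a presheaf of groupoids, and equip C/M with the Grothendieck topology generated by the pretopology whose covers are the families forgetting to covers in C. Then the covers of the special form {(u_i, id) : (U_i, M(u_i)(a)) → (X,a)}, for {u_i : U_i → X} a cover in C and a an object of M(X), generate this topology: a presheaf of sets F on C/M is a sheaf for this topology if and only if F satisfies the sheaf condition with respect to every presieve of this special form. -/
/-!
STATEMENT 2: Let `C` be a small category with pullbacks equipped with a
Grothendieck pretopology `K`, `M : Cᵒᵖ ⥤ Grpd` a presheaf of groupoids, and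
equip `C/M` with the Grothendieck topology generated by the (pre)topology whose
covers are the families of morphisms of `C/M` whose underlying families of
morphisms of `C` are covers.  Then the covers of the special form
`{(u_i, id) : (U_i, M(u_i)(a)) → (X, a)}` for `{u_i : U_i → X}` a cover in `C`
generate the topology: a presheaf of sets `F` on `C/M` is a sheaf iff it
satisfies the sheaf condition with respect to every presieve of this special
form.

We realize `C/M` as the opposite of Mathlib's Grothendieck construction of
`M ⋙ Grpd.forgetToCat` over `Cᵒᵖ`.
-/

open CategoryTheory Opposite Limits

universe u

namespace Hollander

variable {C : Type u} [SmallCategory C]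

variable (M : Cᵒᵖ ⥤ Grpd.{u, u})

/-- The underlying family in `C` of a family of morphisms of `C/M`. -/
def underlyingPresieve {P : CM M} (R : Presieve P) : Presieve ((CMforget M).obj P) :=
  fun U u => ∃ (b : M.obj (op U)) (f : CMobj M U b ⟶ P),
    R f ∧ (CMforget M).map f = u

/-- The Grothendieck topology generated by a collection of covering families:
the smallest Grothendieck topology for which each of the given families
generates a covering sieve. -/
def genTopology {D : Type u} [SmallCategory D] (K : ∀ X : D, Set (Presieve X)) :
    GrothendieckTopology D :=
  sInf {J | ∀ (X : D) (R : Presieve X), R ∈ K X → Sieve.generate R ∈ J X}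

/-- The topology on `C/M` generated by the pretopology whose covers are the
families of morphisms of `C/M` whose underlying families are covers in `C`. -/
def cmTopology [HasPullbacks C] (K : Pretopology C) : GrothendieckTopology (CM M) :=
  genTopology (fun P => {R | underlyingPresieve M R ∈ K.coverings ((CMforget M).obj P)})

/-- The special covering family `{(u, id) : (U, M(u)(a)) → (X, a)}` of `C/M`
associated to a family `{u : U → X}` of morphisms of `C` (a member of the
family for each `u : U ⟶ X` belonging to `S`). -/
def specialPresieve (X : C) (a : M.obj (op X)) (S : Presieve X) :
    Presieve (CMobj M X a) :=
  Presieve.ofArrows (ι := (U : C) × {u : U ⟶ X // S u})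
    (fun i => CMobj M i.1 ((M.map i.2.1.op).obj a))
    (fun i => CMhom M i.2.1 (𝟙 _))


section Aux

lemma CMhom_comp {X Y W : C} {a : M.obj (op X)} {b : M.obj (op Y)} {c : M.obj (op W)}
    (l : W ⟶ Y) (v : Y ⟶ X) (δ : (M.map l.op).obj b ⟶ c) (β : (M.map v.op).obj a ⟶ b) :
    CMhom M l δ ≫ CMhom M v β =
      CMhom M (l ≫ v) (eqToHom (by rw [op_comp, M.map_comp]; rfl) ≫ (M.map l.op).map β ≫ δ) :=
  rfl

lemma CMhom_congr {X Y : C} {a : M.obj (op X)} {b : M.obj (op Y)}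
    {u u' : Y ⟶ X} (h : u = u') (α : (M.map u.op).obj a ⟶ b) :
    CMhom M u α = CMhom M u' (eqToHom (by rw [h]) ≫ α) := by
  subst h; simp

lemma CMhom_fac {X Y W : C} {a : M.obj (op X)} {b : M.obj (op Y)} {c : M.obj (op W)}
    (l : W ⟶ Y) (v : Y ⟶ X) (γ : (M.map (l ≫ v).op).obj a ⟶ c) (β : (M.map v.op).obj a ⟶ b) :
    ∃ δ : (M.map l.op).obj b ⟶ c, CMhom M (l ≫ v) γ = CMhom M l δ ≫ CMhom M v β := by
  refine ⟨Groupoid.inv ((M.map l.op).map β) ≫ eqToHom (by rw [op_comp, M.map_comp]; rfl) ≫ γ, ?_⟩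
  rw [CMhom_comp]
  congr 1
  simp

lemma underlying_special (X : C) (a : M.obj (op X)) (S : Presieve X) :
    underlyingPresieve M (specialPresieve M X a S) = S := by
  funext U
  ext w
  constructor
  · rintro ⟨b, f, hf, rfl⟩
    cases hf with
    | mk i => exact i.2.2
  · intro hw
    exact ⟨_, CMhom M w (𝟙 _),
      Presieve.ofArrows.mk (⟨U, w, hw⟩ : (V : C) × {u : V ⟶ X // S u}), rfl⟩

lemma mem_of_base {X V W : C} {a : M.obj (op X)} {d : M.obj (op V)} {c : M.obj (op W)}
    {T : Sieve (CMobj M X a)} {h : CMobj M V d ⟶ CMobj M X a} (hh : T h)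
    (l : W ⟶ V) (γ : (M.map (l ≫ (CMforget M).map h).op).obj a ⟶ c) :
    T.arrows (CMhom M (l ≫ (CMforget M).map h) γ) := by
  obtain ⟨δ, hδ⟩ := CMhom_fac M l ((CMforget M).map h) γ h.unop.fiber
  exact hδ ▸ T.downward_closed hh _

lemma core [HasPullbacks C] {X Y : C} {a : M.obj (op X)} {b : M.obj (op Y)}
    (R : Presieve (CMobj M X a)) (f : CMobj M Y b ⟶ CMobj M X a) :
    specialPresieve M Y b
        (Presieve.pullbackArrows ((CMforget M).map f) (underlyingPresieve M R) :
        Presieve ((CMforget M).obj (CMobj M Y b)))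
      ≤ (((Sieve.generate R).pullback f) : Presieve (CMobj M Y b)) := by
  rintro Q g hg
  cases hg with
  | mk i =>
    obtain ⟨U, w, hw⟩ := i
    cases hw with
    | mk V v hv =>
      obtain ⟨d, h, hRh, hfh⟩ := hv
      subst hfh
      obtain ⟨u, α, rfl⟩ : ∃ u α, f = CMhom M u α := ⟨_, _, rfl⟩
      show (Sieve.generate R).arrows
        (CMhom M (pullback.snd ((CMforget M).map h) u) (𝟙 _) ≫ CMhom M u α)
      rw [CMhom_comp]
      exact (CMhom_congr M (pullback.condition (f := (CMforget M).map h) (g := u)).symm _) ▸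
        mem_of_base M (Sieve.le_generate R _ _ hRh) _ _

lemma sep_mono {D : Type*} [Category D] {F : Dᵒᵖ ⥤ Type*} {X : D} {R₁ R₂ : Presieve X}
    (h : R₁ ≤ R₂) (hs : Presieve.IsSeparatedFor F R₁) : Presieve.IsSeparatedFor F R₂ :=
  fun x t₁ t₂ h₁ h₂ => hs (x.restrict h) t₁ t₂
    (Presieve.isAmalgamation_restrict h x t₁ h₁)
    (Presieve.isAmalgamation_restrict h x t₂ h₂)

variable [HasPullbacks C] (K : Pretopology C) (F : (CM M)ᵒᵖ ⥤ Type u)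

lemma PB (hsp : ∀ (X : C) (a : M.obj (op X)) (S : Presieve X), S ∈ K.coverings X →
      Presieve.IsSheafFor F (specialPresieve M X a S))
    {X : C} {a : M.obj (op X)} (R : Presieve (CMobj M X a))
    (hR : underlyingPresieve M R ∈ K.coverings X)
    {Q : CM M} (f : Q ⟶ CMobj M X a) :
    Presieve.IsSheafFor F (((Sieve.generate R).pullback f) : Presieve Q) := by
  obtain ⟨⟨⟨Y⟩, b⟩⟩ := Q
  have hS' : Presieve.pullbackArrows ((CMforget M).map f) (underlyingPresieve M R)
      ∈ K.coverings Y := K.pullbacks _ _ hR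
  apply Presieve.isSheafFor_subsieve_aux F
    (S := Sieve.generate (specialPresieve M Y b
      (Presieve.pullbackArrows ((CMforget M).map f) (underlyingPresieve M R) :
        Presieve ((CMforget M).obj (CMobj M Y b)))))
  · exact fun Z g hg => (Sieve.generate_le_iff _ _).2 (core M R f) _ hg
  · rw [← Presieve.isSheafFor_iff_generate]
    exact hsp Y b _ hS'
  · rintro Qz g -
    obtain ⟨⟨⟨Z⟩, c⟩⟩ := Qz
    have h2 := core M (specialPresieve M Y b
      (Presieve.pullbackArrows ((CMforget M).map f) (underlyingPresieve M R) :
        Presieve ((CMforget M).obj (CMobj M Y b)))) g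
    erw [underlying_special] at h2
    exact sep_mono h2 (hsp Z c _ (K.pullbacks _ _ hS')).isSeparatedFor

end Aux

end Hollander

open Hollander in
/-- A presheaf of sets `F` on `C/M` is a sheaf for the
topology generated by the pretopology whose covers are the families forgetting
to covers in `C` if and only if `F` satisfies the sheaf condition with respect
to every presieve of the special form
`{(u_i, id) : (U_i, M(u_i)(a)) → (X, a)}` with `{u_i : U_i → X}` a cover
in `C` and `a` an object of `M(X)`. -/
theorem stmt2 {C : Type u} [SmallCategory C] [HasPullbacks C] (K : Pretopology C)
    (M : Cᵒᵖ ⥤ Grpd.{u, u}) (F : (CM M)ᵒᵖ ⥤ Type u) :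
    Presieve.IsSheaf (cmTopology M K) F ↔
      ∀ (X : C) (a : M.obj (op X)) (S : Presieve X), S ∈ K.coverings X →
        Presieve.IsSheafFor F (specialPresieve M X a S) := by
  constructor
  · intro hF X a S hS
    rw [Presieve.isSheafFor_iff_generate]
    refine hF _ ?_
    rw [cmTopology, genTopology, GrothendieckTopology.mem_sInf]
    intro J hJ
    refine hJ _ _ (show underlyingPresieve M (specialPresieve M X a S)
      ∈ K.coverings ((CMforget M).obj (CMobj M X a)) from ?_)
    rw [underlying_special]
    exact hS
  · intro h P T hT
    have hle : cmTopology M K ≤ Sheaf.finestTopologySingle F := by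
      apply sInf_le
      intro P R hR
      obtain ⟨⟨⟨X⟩, a⟩⟩ := P
      intro Q g
      exact PB M K F h R hR g
    have := hle _ hT _ (𝟙 P)
    rwa [Sieve.pullback_id] at this
end
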